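/- Let p, q be nonzero complex numbers, let A be a (not necessarily commutative) ℂ-algebra, and let Θ, Φ, a, b, c, d ∈ A be such that: ΘΦ = q·ΦΘ; each of a, b, c, d commutes with Θ and with Φ; and a, b, c, d satisfy the GL_{p,q}(2) relations ab = p·ba, cd = p·dc, ac = q·ca, bd = q·db, p·bc = q·cb, and ad - da = (p - q⁻¹)·bc. Then the transformed differentials Θ' = aΘ + bΦ and Φ' = cΘ + dΦ satisfy Θ'Φ' = q·Φ'Θ'. -/

import Mathlib

/-- The quantum plane relation `ΘΦ = qΦΘ` between the differentials is preserved under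
the transformation `Θ' = aΘ + bΦ`, `Φ' = cΘ + dΦ` by a quantum matrix with entries
satisfying the `GL_{p,q}(2)` relations and commuting with the differentials. -/
theorem differentials_covariance (p q : ℂ) (hp : p ≠ 0) (hq : q ≠ 0)
    {A : Type*} [Ring A] [Algebra ℂ A] (Θ Φ a b c d : A)
    (hΘΦ : Θ * Φ = q • (Φ * Θ))
    (hcomm : ∀ t ∈ ({a, b, c, d} : Set A), ∀ x ∈ ({Θ, Φ} : Set A), t * x = x * t)
    (hab : a * b = p • (b * a)) (hcd : c * d = p • (d * c))
    (hac : a * c = q • (c * a)) (hbd : b * d = q • (d * b))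
    (hbc : p • (b * c) = q • (c * b))
    (had : a * d - d * a = (p - q⁻¹) • (b * c)) :
    (a * Θ + b * Φ) * (c * Θ + d * Φ) = q • ((c * Θ + d * Φ) * (a * Θ + b * Φ)) := by
  have haΘ : a * Θ = Θ * a := hcomm a (by simp) Θ (by simp)
  have haΦ : a * Φ = Φ * a := hcomm a (by simp) Φ (by simp)
  have hbΘ : b * Θ = Θ * b := hcomm b (by simp) Θ (by simp)
  have hbΦ : b * Φ = Φ * b := hcomm b (by simp) Φ (by simp)
  have hcΘ : c * Θ = Θ * c := hcomm c (by simp) Θ (by simp)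
  have hcΦ : c * Φ = Φ * c := hcomm c (by simp) Φ (by simp)
  have hdΘ : d * Θ = Θ * d := hcomm d (by simp) Θ (by simp)
  have hdΦ : d * Φ = Φ * d := hcomm d (by simp) Φ (by simp)
  -- normalize each monomial to (entries) * (differentials)
  have e1 : a * Θ * (c * Θ) = a * c * (Θ * Θ) := by
    rw [mul_assoc a, ← mul_assoc Θ, ← hcΘ, mul_assoc c, ← mul_assoc a]
  have e2 : a * Θ * (d * Φ) = a * d * (Θ * Φ) := by
    rw [mul_assoc a, ← mul_assoc Θ, ← hdΘ, mul_assoc d, ← mul_assoc a]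
  have e3 : b * Φ * (c * Θ) = b * c * (Φ * Θ) := by
    rw [mul_assoc b, ← mul_assoc Φ, ← hcΦ, mul_assoc c, ← mul_assoc b]
  have e4 : b * Φ * (d * Φ) = b * d * (Φ * Φ) := by
    rw [mul_assoc b, ← mul_assoc Φ, ← hdΦ, mul_assoc d, ← mul_assoc b]
  have f1 : c * Θ * (a * Θ) = c * a * (Θ * Θ) := by
    rw [mul_assoc c, ← mul_assoc Θ, ← haΘ, mul_assoc a, ← mul_assoc c]
  have f2 : c * Θ * (b * Φ) = c * b * (Θ * Φ) := by
    rw [mul_assoc c, ← mul_assoc Θ, ← hbΘ, mul_assoc b, ← mul_assoc c]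
  have f3 : d * Φ * (a * Θ) = d * a * (Φ * Θ) := by
    rw [mul_assoc d, ← mul_assoc Φ, ← haΦ, mul_assoc a, ← mul_assoc d]
  have f4 : d * Φ * (b * Φ) = d * b * (Φ * Φ) := by
    rw [mul_assoc d, ← mul_assoc Φ, ← hbΦ, mul_assoc b, ← mul_assoc d]
  -- the key scalar identity for the cross terms
  have key : q • (a * d) + b * c = (q * q) • (c * b) + q • (d * a) := by
    have h1 : a * d = d * a + (p - q⁻¹) • (b * c) := by
      rw [← had]; abel
    have h2 : (q * q) • (c * b) = (q * p) • (b * c) := by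
      rw [mul_smul, ← hbc, smul_smul]
    rw [h1, h2, smul_add, smul_smul]
    have : q * (p - q⁻¹) = q * p - 1 := by
      field_simp
    rw [this]
    rw [sub_smul, one_smul]
    abel
  rw [add_mul, mul_add, mul_add, e1, e2, e3, e4, add_mul, mul_add, mul_add,
    f1, f2, f3, f4, hΘΦ, hac, hbd]
  have expand : a * d * (q • (Φ * Θ)) + b * c * (Φ * Θ)
      = (q • (a * d) + b * c) * (Φ * Θ) := by
    rw [add_mul, mul_smul_comm, smul_mul_assoc]
  have expand2 : q • (c * b * (q • (Φ * Θ))) + q • (d * a * (Φ * Θ))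
      = ((q * q) • (c * b) + q • (d * a)) * (Φ * Θ) := by
    rw [add_mul, smul_mul_assoc, smul_mul_assoc, mul_smul_comm, smul_smul]
  calc q • (c * a) * (Θ * Θ) + a * d * (q • (Φ * Θ)) + (b * c * (Φ * Θ) + q • (d * b) * (Φ * Φ))
      = q • (c * a) * (Θ * Θ) + (a * d * (q • (Φ * Θ)) + b * c * (Φ * Θ)) + q • (d * b) * (Φ * Φ) := by abel
    _ = q • (c * a) * (Θ * Θ) + ((q * q) • (c * b) + q • (d * a)) * (Φ * Θ) + q • (d * b) * (Φ * Φ) := by rw [expand, key]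
    _ = q • (c * a) * (Θ * Θ) + (q • (c * b * (q • (Φ * Θ))) + q • (d * a * (Φ * Θ))) + q • (d * b) * (Φ * Φ) := by rw [expand2]
    _ = q • (c * a * (Θ * Θ) + c * b * (q • (Φ * Θ)) + (d * a * (Φ * Θ) + d * b * (Φ * Φ))) := by
        simp only [smul_add, smul_mul_assoc]; abel
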